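/- For any finite Coxeter system (W,S) and any w in W, every Bruhat-minimal element among the set {v ∈ W : v ≰ w} is bigrassmannian, i.e., both v and v⁻¹ have at most one right descent. -/

import Mathlib

/-- The Bruhat order on a Coxeter group, via the subword property:
`u ≤ w` iff `u` is the product of some subword of some reduced word for `w`. -/
def BruhatLE {B W : Type*} [Group W] {M : CoxeterMatrix B} (cs : CoxeterSystem M W)
    (u w : W) : Prop :=
  ∃ l : List B, cs.IsReduced l ∧ cs.wordProd l = w ∧
    ∃ l' : List B, l'.Sublist l ∧ cs.wordProd l' = u


open CoxeterSystem List

namespace GeomRep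

variable {B : Type*} (M : CoxeterMatrix B)

noncomputable def CM (k l : B) : ℝ := - Real.cos (Real.pi / M.M k l)

lemma CM_diag (k : B) : CM M k k = 1 := by
  unfold CM
  rw [M.diagonal k]
  simp [Real.cos_pi]

lemma CM_symm (k l : B) : CM M k l = CM M l k := by
  unfold CM
  rw [M.symmetric k l]

noncomputable def bform (k : B) : (B →₀ ℝ) →ₗ[ℝ] ℝ :=
  Finsupp.linearCombination ℝ (fun l => CM M k l)

lemma bform_single (k l : B) : bform M k (Finsupp.single l 1) = CM M k l := by
  unfold bform
  rw [Finsupp.linearCombination_single, one_smul]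

noncomputable def sig (k : B) : Module.End ℝ (B →₀ ℝ) :=
  LinearMap.id - (bform M k).smulRight ((2:ℝ) • Finsupp.single k 1)

lemma sig_apply (k : B) (v : B →₀ ℝ) :
    sig M k v = v - (2 * bform M k v) • Finsupp.single k 1 := by
  unfold sig
  simp [LinearMap.sub_apply, LinearMap.smulRight_apply, smul_smul, mul_comm]

lemma sig_single (k l : B) :
    sig M k (Finsupp.single l 1)
      = Finsupp.single l 1 - (2 * CM M k l) • Finsupp.single k 1 := by
  rw [sig_apply, bform_single]

lemma bform_sig (k : B) (v : B →₀ ℝ) : bform M k (sig M k v) = - bform M k v := by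
  rw [sig_apply, map_sub, map_smul, bform_single, CM_diag]
  simp
  ring

lemma sig_invol (k : B) : sig M k * sig M k = 1 := by
  apply LinearMap.ext
  intro v
  rw [Module.End.mul_apply, Module.End.one_apply]
  rw [sig_apply M k (sig M k v), bform_sig]
  rw [sig_apply]
  have h : (2 * -bform M k v) = -(2 * bform M k v) := by ring
  rw [h, neg_smul, sub_neg_eq_add]
  abel




/-! ### Trigonometric sequences -/

noncomputable def theta (m : ℕ) : ℝ := Real.pi / m

lemma sin_theta_pos {m : ℕ} (hm2 : 2 ≤ m) : 0 < Real.sin (theta m) := by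
  have hm0 : (0:ℝ) < m := by exact_mod_cast Nat.lt_of_lt_of_le Nat.zero_lt_two hm2
  have hm1 : (1:ℝ) < m := by exact_mod_cast Nat.lt_of_lt_of_le Nat.one_lt_two hm2
  apply Real.sin_pos_of_pos_of_lt_pi
  · exact div_pos Real.pi_pos hm0
  · unfold theta
    rw [div_lt_iff₀ hm0]
    calc Real.pi = Real.pi * 1 := by ring
    _ < Real.pi * m := by
      apply mul_lt_mul_of_pos_left hm1 Real.pi_pos

/-- Product-to-sum identity. -/
lemma p2s (A θ : ℝ) : 2*Real.cos θ*Real.sin (A+θ) = Real.sin (A+2*θ) + Real.sin A := by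
  rw [Real.sin_add A (2*θ), Real.sin_add A θ, Real.sin_two_mul, Real.cos_two_mul]
  ring

noncomputable def aa (m n : ℕ) : ℝ := Real.sin ((2*(n:ℝ)+1) * theta m) / Real.sin (theta m)
noncomputable def bb (m n : ℕ) : ℝ := - Real.sin ((2*(n:ℝ)) * theta m) / Real.sin (theta m)
noncomputable def cc (m n : ℕ) : ℝ := Real.sin ((2*(n:ℝ)) * theta m) / Real.sin (theta m)
noncomputable def dd (m n : ℕ) : ℝ := - Real.sin ((2*(n:ℝ)-1) * theta m) / Real.sin (theta m)

lemma coeff_zero {m : ℕ} (hm2 : 2 ≤ m) :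
    aa m 0 = 1 ∧ cc m 0 = 0 ∧ bb m 0 = 0 ∧ dd m 0 = 1 := by
  have hs := sin_theta_pos hm2
  refine ⟨?_, ?_, ?_, ?_⟩
  · unfold aa
    rw [show (2*((0:ℕ):ℝ)+1) * theta m = theta m by push_cast; ring, div_self hs.ne']
  · unfold cc
    rw [show (2*((0:ℕ):ℝ)) * theta m = 0 by push_cast; ring, Real.sin_zero, zero_div]
  · unfold bb
    rw [show (2*((0:ℕ):ℝ)) * theta m = 0 by push_cast; ring, Real.sin_zero, neg_zero, zero_div]
  · unfold dd
    rw [show (2*((0:ℕ):ℝ)-1) * theta m = -(theta m) by push_cast; ring, Real.sin_neg, neg_neg,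
      div_self hs.ne']

lemma coeff_rec {m : ℕ} (hm2 : 2 ≤ m) (n : ℕ) :
    aa m n * (4*Real.cos (theta m)^2-1) - 2*Real.cos (theta m)*cc m n = aa m (n+1) ∧
    2*Real.cos (theta m)*aa m n - cc m n = cc m (n+1) ∧
    bb m n * (4*Real.cos (theta m)^2-1) - 2*Real.cos (theta m)*dd m n = bb m (n+1) ∧
    2*Real.cos (theta m)*bb m n - dd m n = dd m (n+1) := by
  have hs := sin_theta_pos hm2
  set θ := theta m with hθ
  set c := Real.cos θ with hc
  set s := Real.sin θ with hsdef
  set X := 2*(n:ℝ)*θ with hX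
  have p1 := p2s X θ
  have p2 := p2s (X+θ) θ
  rw [show X+θ+2*θ = X+3*θ by ring, show X+θ+θ = X+2*θ by ring] at p2
  have p3 := p2s (X-θ) θ
  rw [show X-θ+2*θ = X+θ by ring, show X-θ+θ = X by ring] at p3
  unfold aa bb cc dd
  push_cast
  rw [show (2*(n:ℝ)+1)*θ = X+θ by rw [hX]; ring,
      show (2*((n:ℝ)+1))*θ = X+2*θ by rw [hX]; ring,
      show (2*((n:ℝ)+1)+1)*θ = X+3*θ by rw [hX]; ring,
      show (2*(n:ℝ)-1)*θ = X-θ by rw [hX]; ring,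
      show (2*((n:ℝ)+1)-1)*θ = X+θ by rw [hX]; ring,
      show (2*(n:ℝ))*θ = X by rw [hX]]
  refine ⟨?_, ?_, ?_, ?_⟩
  · rw [show Real.sin (X+θ)/s * (4*c^2-1) - 2*c*(Real.sin X/s)
        = (Real.sin (X+θ) * (4*c^2-1) - 2*c*Real.sin X)/s by ring]
    congr 1
    linear_combination 2*c*p1 + p2
  · rw [show 2*c*(Real.sin (X+θ)/s) - Real.sin X/s
        = (2*c*Real.sin (X+θ) - Real.sin X)/s by ring]
    congr 1
    linear_combination p1
  · rw [show -Real.sin X/s * (4*c^2-1) - 2*c*(-Real.sin (X-θ)/s)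
        = (-(Real.sin X * (4*c^2-1)) + 2*c*Real.sin (X-θ))/s by ring,
       show -Real.sin (X+2*θ)/s = (-Real.sin (X+2*θ))/s by ring]
    congr 1
    linear_combination (-2*c)*p3 + (-1)*p1
  · rw [show 2*c*(-Real.sin X/s) - -Real.sin (X-θ)/s
        = (-(2*c*Real.sin X) + Real.sin (X-θ))/s by ring,
       show -Real.sin (X+θ)/s = (-Real.sin (X+θ))/s by ring]
    congr 1
    linear_combination (-1)*p3

lemma coeff_final {m : ℕ} (hm2 : 2 ≤ m) :
    aa m m = 1 ∧ cc m m = 0 ∧ bb m m = 0 ∧ dd m m = 1 := by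
  have hs := sin_theta_pos hm2
  have hm0 : (m:ℝ) ≠ 0 := by positivity
  have h2pi : 2*(m:ℝ) * theta m = 2 * Real.pi := by
    unfold theta; field_simp
  refine ⟨?_, ?_, ?_, ?_⟩
  · unfold aa
    rw [show (2*(m:ℝ)+1) * theta m = theta m + 2*Real.pi by rw [add_mul, h2pi]; ring,
      Real.sin_add_two_pi, div_self hs.ne']
  · unfold cc
    rw [show (2*(m:ℝ)) * theta m = 0 + 2*Real.pi by rw [h2pi]; ring,
      Real.sin_add_two_pi, Real.sin_zero, zero_div]
  · unfold bb
    rw [show (2*(m:ℝ)) * theta m = 0 + 2*Real.pi by rw [h2pi]; ring,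
      Real.sin_add_two_pi, Real.sin_zero, neg_zero, zero_div]
  · unfold dd
    rw [show (2*(m:ℝ)-1) * theta m = -(theta m) + 2*Real.pi by rw [sub_mul, h2pi]; ring,
      Real.sin_add_two_pi, Real.sin_neg, neg_neg, div_self hs.ne']

/-! ### The braid relation for the geometric representation -/

lemma sig_braid {k l : B} (hkl : k ≠ l) : (sig M k * sig M l) ^ (M.M k l) = 1 := by
  rcases Nat.eq_zero_or_pos (M.M k l) with hm0 | hmpos
  · rw [hm0, pow_zero]
  · have hm2 : 2 ≤ M.M k l := by
      have := M.off_diagonal k l hkl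
      omega
    set m := M.M k l with hm
    set θ := theta m with hθ
    set c := Real.cos θ with hc
    have hs : 0 < Real.sin θ := sin_theta_pos (m := m) hm2
    have hssq : Real.sin θ ^ 2 = 1 - c ^ 2 := by
      rw [hc, Real.sin_sq]
    have hγk : CM M k l = -c := by
      rw [hc, hθ]
      unfold CM theta
      rw [← hm]
    have hγl : CM M l k = -c := by rw [CM_symm]; exact hγk
    set Q := sig M k * sig M l with hQ
    set ek : B →₀ ℝ := Finsupp.single k 1 with hek
    set el : B →₀ ℝ := Finsupp.single l 1 with hel
    have hskek : sig M k ek = (-1:ℝ) • ek := by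
      rw [hek, sig_single, CM_diag]; module
    have hskel : sig M k el = el + (2*c) • ek := by
      rw [hek, hel, sig_single, hγk]; module
    have hslek : sig M l ek = ek + (2*c) • el := by
      rw [hek, hel, sig_single, hγl]; module
    have hslel : sig M l el = (-1:ℝ) • el := by
      rw [hel, sig_single, CM_diag]; module
    have hQek : Q ek = (4*c^2-1) • ek + (2*c) • el := by
      rw [hQ, Module.End.mul_apply, hslek, map_add, map_smul, hskek, hskel]; module
    have hQel : Q el = (-(2*c)) • ek + (-1 : ℝ) • el := by
      rw [hQ, Module.End.mul_apply, hslel, map_smul, hskel]; module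
    have hpow : ∀ n : ℕ, (Q^n) ek = aa m n • ek + cc m n • el ∧
        (Q^n) el = bb m n • ek + dd m n • el := by
      intro n
      induction n with
      | zero =>
        obtain ⟨h1, h2, h3, h4⟩ := coeff_zero (m := m) hm2
        rw [pow_zero, h1, h2, h3, h4]
        constructor <;> simp
      | succ n ih =>
        obtain ⟨iha, ihb⟩ := ih
        obtain ⟨r1, r2, r3, r4⟩ := coeff_rec (m := m) hm2 n
        rw [← hθ, ← hc] at r1 r2 r3 r4
        constructor
        · rw [pow_succ', Module.End.mul_apply, iha, map_add, map_smul, map_smul, hQek, hQel,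
            ← r1, ← r2]
          module
        · rw [pow_succ', Module.End.mul_apply, ihb, map_add, map_smul, map_smul, hQek, hQel,
            ← r3, ← r4]
          module
    -- now prove Q^m = 1 on every vector
    apply LinearMap.ext
    intro v
    rw [Module.End.one_apply]
    set av : ℝ := bform M k v with hav
    set bv : ℝ := bform M l v with hbv
    have hdenom : 1 - (-c)^2 ≠ 0 := by
      have h' : (1 : ℝ) - (-c)^2 = Real.sin θ^2 := by rw [hssq]; ring
      rw [h']
      positivity
    have hdenom' : (1:ℝ) - c^2 ≠ 0 := by
      intro hh
      exact hdenom (by rw [← hh]; ring)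
    set x : ℝ := (av - (-c)*bv)/(1-(-c)^2) with hx
    set y : ℝ := (bv - (-c)*av)/(1-(-c)^2) with hy
    set r : B →₀ ℝ := v - x • ek - y • el with hr
    have hbk : bform M k r = 0 := by
      rw [hr, map_sub, map_sub, map_smul, map_smul, hek, hel, bform_single, bform_single,
        CM_diag, hγk, ← hav]
      simp only [smul_eq_mul]
      rw [hx, hy]
      field_simp [hdenom']
      ring
    have hbl : bform M l r = 0 := by
      rw [hr, map_sub, map_sub, map_smul, map_smul, hek, hel, bform_single, bform_single,
        CM_diag, hγl, ← hbv]
      simp only [smul_eq_mul]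
      rw [hx, hy]
      field_simp [hdenom']
      ring
    have hsk : sig M k r = r := by rw [sig_apply, hbk]; simp
    have hsl : sig M l r = r := by rw [sig_apply, hbl]; simp
    have hQr : Q r = r := by rw [hQ, Module.End.mul_apply, hsl, hsk]
    have hQnr : ∀ n : ℕ, (Q^n) r = r := by
      intro n
      induction n with
      | zero => simp
      | succ n ih => rw [pow_succ, Module.End.mul_apply, hQr, ih]
    have hv : v = x • ek + y • el + r := by rw [hr]; abel
    obtain ⟨hfa, hfc, hfb, hfd⟩ := coeff_final (m := m) hm2
    rw [hv, map_add, map_add, map_smul, map_smul, (hpow m).1, (hpow m).2, hQnr,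
      hfa, hfb, hfc, hfd]
    simp

lemma sig_liftable : M.IsLiftable (sig M) := by
  intro k l
  rcases eq_or_ne k l with rfl | hkl
  · rw [M.diagonal, pow_one]
    exact sig_invol M k
  · exact sig_braid M hkl

end GeomRep

namespace BruhatAux2

open GeomRep

lemma simple_injective {B W : Type*} [Group W] {M : CoxeterMatrix B} (cs : CoxeterSystem M W) :
    Function.Injective cs.simple := by
  intro s t h
  by_contra hst
  have hφ := cs.lift_apply_simple (sig_liftable M) s
  have hφ' := cs.lift_apply_simple (sig_liftable M) t
  have hsig : sig M s = sig M t := by rw [← hφ, ← hφ', h]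
  have heval := congrArg (fun f : Module.End ℝ (B →₀ ℝ) => (f (Finsupp.single s 1)) s) hsig
  rw [sig_single, sig_single, CM_diag] at heval
  simp only [Finsupp.sub_apply, Finsupp.smul_apply, Finsupp.single_eq_same,
    Finsupp.single_eq_of_ne hst, smul_eq_mul] at heval
  norm_num at heval

end BruhatAux2

namespace BruhatAux

open scoped Classical

variable {B W : Type*} [Group W] {M : CoxeterMatrix B} (cs : CoxeterSystem M W)

local prefix:100 "σ" => cs.simple
local prefix:100 "π" => cs.wordProd
local prefix:100 "ℓ" => cs.length

/-- The function underlying the reflection-sign representation. -/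
noncomputable def epsFun (i : B) : W × ZMod 2 → W × ZMod 2 :=
  fun x => (σ i * x.1 * σ i, x.2 + if x.1 = σ i then 1 else 0)

lemma conj_simple_eq_simple_iff (i : B) (t : W) :
    (σ i * t * σ i = σ i) ↔ (t = σ i) := by
  constructor
  · intro h'
    have := congrArg (fun z => σ i * z * σ i) h'
    simp only [mul_assoc] at this
    simpa [cs.simple_mul_simple_cancel_left, cs.simple_mul_simple_self, ← mul_assoc] using this
  · rintro rfl; simp [cs.simple_mul_simple_self]

lemma epsFun_invol (i : B) : Function.Involutive (epsFun cs i) := by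
  rintro ⟨t, e⟩
  have h : σ i * (σ i * t * σ i) * σ i = t := by
    group; simp [cs.simple_sq]
  simp only [epsFun, h, conj_simple_eq_simple_iff]
  by_cases ht : t = σ i <;>
    simp [ht, add_assoc, (by decide : (1 : ZMod 2) + 1 = 0)]

/-- The basic involution used to build the reflection-sign representation. -/
noncomputable def eps (i : B) : Equiv.Perm (W × ZMod 2) :=
  (epsFun_invol cs i).toPerm

@[simp] lemma eps_apply (i : B) (t : W) (e : ZMod 2) :
    eps cs i (t, e) = (σ i * t * σ i, e + if t = σ i then 1 else 0) := rfl

private lemma sum_pair (h : ℕ → ZMod 2) : ∀ m : ℕ,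
    (∑ k ∈ Finset.range m, (h (2 * k) + h (2 * k + 1))) = ∑ r ∈ Finset.range (2 * m), h r := by
  intro m
  induction m with
  | zero => simp
  | succ m ih =>
    rw [Finset.sum_range_succ, ih, Nat.mul_succ, Finset.sum_range_succ, Finset.sum_range_succ]
    ring

lemma eps_liftable : M.IsLiftable (eps cs) := by
  intro i j
  rcases eq_or_ne i j with rfl | hij
  · rw [M.diagonal, pow_one]
    apply Equiv.ext
    intro x
    rw [Equiv.Perm.mul_apply]
    show (eps cs i) ((eps cs i) x) = x
    exact epsFun_invol cs i x
  · set m := M.M i j with hm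
    set p : W := σ i * σ j with hp
    have hpm : p ^ m = 1 := cs.simple_mul_simple_pow i j
    have hps : p⁻¹ * σ j = σ j * p := by
      rw [hp]
      simp [mul_inv_rev, cs.inv_simple, mul_assoc, cs.simple_mul_simple_cancel_left]
    have hppow : ∀ a : ℕ, p⁻¹ * (σ j * p ^ a) = σ j * p ^ (a + 1) := by
      intro a
      rw [← mul_assoc, hps, mul_assoc, ← pow_succ']
    have key : ∀ n : ℕ, ∀ t : W, ∀ e : ZMod 2,
        ((eps cs i * eps cs j) ^ n) (t, e) =
          (p ^ n * t * (p ^ n)⁻¹,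
            e + ∑ k ∈ Finset.range n,
              ((if t = σ j * p ^ (2 * k) then (1 : ZMod 2) else 0)
                + (if t = σ j * p ^ (2 * k + 1) then (1 : ZMod 2) else 0))) := by
      intro n
      induction n with
      | zero => intro t e; simp
      | succ n ih =>
        intro t e
        rw [pow_succ, Equiv.Perm.mul_apply]
        have step : ((eps cs i * eps cs j) (t, e)) =
            (p * t * p⁻¹, e + ((if t = σ j * p ^ 0 then (1 : ZMod 2) else 0)
              + (if t = σ j * p ^ 1 then (1 : ZMod 2) else 0))) := by
          rw [Equiv.Perm.mul_apply, eps_apply, eps_apply, Prod.mk.injEq]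
          refine ⟨?_, ?_⟩
          · rw [hp]; simp [mul_inv_rev, cs.inv_simple, mul_assoc]
          · simp only [pow_zero, mul_one, pow_one]
            have hconj : ∀ a u t' : W, a * a = 1 → ((a * t' * a = u) ↔ (t' = a * u * a)) := by
              intro a u t' ha
              constructor
              · intro h'
                rw [← h', ← mul_assoc, ← mul_assoc, ha, one_mul, mul_assoc, ha, mul_one]
              · intro h'
                rw [h', ← mul_assoc, ← mul_assoc, ha, one_mul, mul_assoc, ha, mul_one]
            have hcond : (σ j * t * σ j = σ i) ↔ (t = σ j * p) := by
              rw [hconj _ _ _ (cs.simple_mul_simple_self j), hp, ← mul_assoc]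
            rw [hcond]
            ring
        rw [step, ih, Prod.mk.injEq]
        refine ⟨?_, ?_⟩
        · simp only [pow_succ']
          group
        · rw [Finset.sum_range_succ' (fun k => ((if t = σ j * p ^ (2 * k) then (1 : ZMod 2) else 0)
                + (if t = σ j * p ^ (2 * k + 1) then (1 : ZMod 2) else 0)))]
          have hc : ∀ k : ℕ,
              ((if p * t * p⁻¹ = σ j * p ^ (2 * k) then (1 : ZMod 2) else 0)
                + (if p * t * p⁻¹ = σ j * p ^ (2 * k + 1) then (1 : ZMod 2) else 0))
              = ((if t = σ j * p ^ (2 * (k+1)) then (1 : ZMod 2) else 0)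
                + (if t = σ j * p ^ (2 * (k+1) + 1) then (1 : ZMod 2) else 0)) := by
            intro k
            have hgen : ∀ a : ℕ, p⁻¹ * (σ j * p ^ a * p) = σ j * p ^ (a + 2) := by
              intro a
              rw [mul_assoc (σ j) (p ^ a) p, ← pow_succ, hppow]
            have hiff : ∀ a : ℕ, (p * t * p⁻¹ = σ j * p ^ a) ↔ (t = σ j * p ^ (a+2)) := by
              intro a
              rw [mul_inv_eq_iff_eq_mul, ← eq_inv_mul_iff_mul_eq, hgen]
            have e1 : 2 * k + 2 = 2 * (k + 1) := by ring
            have e2 : 2 * k + 1 + 2 = 2 * (k + 1) + 1 := by ring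
            rw [hiff, hiff, e1, e2]
          rw [Finset.sum_congr rfl (fun k _ => hc k)]
          ring
    apply Equiv.ext
    rintro ⟨t, e⟩
    rw [key m t e]
    have h2 : (∑ k ∈ Finset.range m,
        ((if t = σ j * p ^ (2 * k) then (1 : ZMod 2) else 0)
          + (if t = σ j * p ^ (2 * k + 1) then (1 : ZMod 2) else 0)))
        = ∑ r ∈ Finset.range (2 * m), (if t = σ j * p ^ r then (1 : ZMod 2) else 0) :=
      sum_pair (fun r => if t = σ j * p ^ r then (1 : ZMod 2) else 0) m
    have h3 : (∑ r ∈ Finset.range (2 * m), (if t = σ j * p ^ r then (1 : ZMod 2) else 0)) = 0 := by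
      have h2m : 2 * m = m + m := by ring
      rw [h2m, Finset.sum_range_add]
      have hper : ∀ r : ℕ, (if t = σ j * p ^ (m + r) then (1 : ZMod 2) else 0)
          = (if t = σ j * p ^ r then (1 : ZMod 2) else 0) := by
        intro r
        have : p ^ (m + r) = p ^ r := by rw [pow_add, hpm, one_mul]
        rw [this]
      rw [Finset.sum_congr rfl (fun r _ => hper r), ← two_mul]
      have htwo : ∀ x : ZMod 2, 2 * x = 0 := by decide
      rw [htwo]
    rw [h2, h3, hpm]
    simp

/-- The reflection-sign representation. -/
noncomputable def rho : W →* Equiv.Perm (W × ZMod 2) :=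
  cs.lift ⟨eps cs, eps_liftable cs⟩

@[simp] lemma rho_simple (i : B) : rho cs (σ i) = eps cs i :=
  cs.lift_apply_simple (eps_liftable cs) i

lemma rho_wordProd (ω : List B) (t : W) (e : ZMod 2) :
    rho cs (π ω) (t, e) =
      (π ω * t * (π ω)⁻¹, e + (((cs.rightInvSeq ω).count t : ℕ) : ZMod 2)) := by
  induction ω generalizing e with
  | nil => simp
  | cons i α ih =>
    rw [cs.wordProd_cons, map_mul, Equiv.Perm.mul_apply, ih, rho_simple, eps_apply,
      Prod.mk.injEq]
    refine ⟨by simp [mul_assoc, mul_inv_rev], ?_⟩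
    have hris : cs.rightInvSeq (i :: α) = ((π α)⁻¹ * σ i * π α) :: cs.rightInvSeq α := rfl
    rw [hris, List.count_cons]
    have hcond : (π α * t * (π α)⁻¹ = σ i) ↔ ((π α)⁻¹ * σ i * π α = t) := by
      rw [mul_inv_eq_iff_eq_mul, ← eq_inv_mul_iff_mul_eq, eq_comm, mul_assoc]
    by_cases hc : π α * t * (π α)⁻¹ = σ i
    · rw [if_pos hc, if_pos (by rw [beq_iff_eq]; exact hcond.mp hc)]
      push_cast
      ring
    · rw [if_neg hc, if_neg (by rw [beq_iff_eq]; exact fun h => hc (hcond.mpr h))]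
      push_cast
      ring

lemma rho_apply_fst (x : W) (t : W) (e : ZMod 2) :
    (rho cs x (t, e)).1 = x * t * x⁻¹ := by
  obtain ⟨ω, -, rfl⟩ := cs.exists_reduced_word' x
  rw [rho_wordProd]

lemma rho_apply_snd_add (x : W) (t : W) (e : ZMod 2) :
    (rho cs x (t, e)).2 = e + (rho cs x (t, 0)).2 := by
  obtain ⟨ω, -, rfl⟩ := cs.exists_reduced_word' x
  rw [rho_wordProd, rho_wordProd]
  simp

/-- Key flip lemma: a reflection flips the sign over itself. -/
lemma rho_refl_flip {t : W} (ht : cs.IsReflection t) (e : ZMod 2) :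
    rho cs t (t, e) = (t, e + 1) := by
  obtain ⟨x, c, rfl⟩ := ht
  set t := x * σ c * x⁻¹ with hts
  have h1 : ∀ f : ZMod 2, rho cs x⁻¹ (t, f) = (σ c, f + (rho cs x⁻¹ (t, 0)).2) := by
    intro f
    have hfst : (rho cs x⁻¹ (t, f)).1 = σ c := by
      rw [rho_apply_fst, hts]
      group
    have hsnd := rho_apply_snd_add cs x⁻¹ t f
    rw [← hfst, ← hsnd]
  set c₀ := (rho cs x⁻¹ (t, 0)).2 with hc₀
  have h2 : ∀ f : ZMod 2, rho cs x (σ c, f) = (t, f + (rho cs x (σ c, 0)).2) := by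
    intro f
    have hfst : (rho cs x (σ c, f)).1 = t := by rw [rho_apply_fst, hts]
    have hsnd := rho_apply_snd_add cs x (σ c) f
    rw [← hfst, ← hsnd]
  set c₁ := (rho cs x (σ c, 0)).2 with hc₁
  have hid : rho cs x (rho cs x⁻¹ (t, e)) = (t, e) := by
    have h0 : rho cs x * rho cs x⁻¹ = 1 := by rw [← map_mul]; simp
    have := congrArg (fun (g : Equiv.Perm (W × ZMod 2)) => g (t, e)) h0
    simpa [Equiv.Perm.mul_apply] using this
  rw [h1, h2] at hid
  have hcc : e + c₀ + c₁ = e := ((Prod.mk.injEq _ _ _ _).mp hid).2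
  have hmul : rho cs t = rho cs x * rho cs (σ c) * rho cs x⁻¹ := by
    rw [hts, map_mul, map_mul]
  rw [hmul]
  simp only [Equiv.Perm.mul_apply]
  rw [h1]
  have hmid : (rho cs (σ c)) ((σ c : W), e + c₀) = (σ c, e + c₀ + 1) := by
    rw [rho_simple, eps_apply, if_pos rfl, Prod.mk.injEq]
    exact ⟨by simp [cs.simple_mul_simple_cancel_left], rfl⟩
  rw [hmid, h2]
  have hfin : e + c₀ + 1 + c₁ = e + 1 := by
    have h' : e + c₀ + c₁ + 1 = e + 1 := by rw [hcc]
    linear_combination h'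
  rw [hfin]

/-- Strong exchange, membership form. -/
lemma mem_rightInvSeq_of_isRightInversion {t w : W} (ht : cs.IsReflection t)
    (hlt : ℓ (w * t) < ℓ w) (ω : List B) (hω : π ω = w) :
    t ∈ cs.rightInvSeq ω := by
  obtain ⟨α, hα, hv⟩ := cs.exists_reduced_word' (w * t)
  have hw : w = π α * t := by
    rw [← hv, mul_assoc, ht.mul_self, mul_one]
  have hsnd1 : (rho cs w (t, 0)).2 = (((cs.rightInvSeq ω).count t : ℕ) : ZMod 2) := by
    rw [← hω, rho_wordProd]
    simp
  have hnotmem : t ∉ cs.rightInvSeq α := by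
    intro hmem
    have h' := (cs.isRightInversion_of_mem_rightInvSeq hα hmem).2
    rw [← hv, mul_assoc, ht.mul_self, mul_one] at h'
    omega
  have hsnd2 : (rho cs w (t, 0)).2 = 1 := by
    rw [hw, map_mul, Equiv.Perm.mul_apply, rho_refl_flip cs ht, rho_wordProd]
    rw [List.count_eq_zero_of_not_mem hnotmem]
    simp
  rw [hsnd1] at hsnd2
  by_contra hmem
  rw [List.count_eq_zero_of_not_mem hmem] at hsnd2
  simp at hsnd2

/-- Strong exchange property (right version, arbitrary word). -/
lemma strong_exchange {t w : W} (ht : cs.IsReflection t)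
    (hlt : ℓ (w * t) < ℓ w) (ω : List B) (hω : π ω = w) :
    ∃ j < ω.length, π (ω.eraseIdx j) = w * t := by
  have hmem := mem_rightInvSeq_of_isRightInversion cs ht hlt ω hω
  obtain ⟨j, hj, hgetElem⟩ := List.mem_iff_getElem.mp hmem
  rw [cs.length_rightInvSeq] at hj
  refine ⟨j, hj, ?_⟩
  have hgd : (cs.rightInvSeq ω).getD j 1 = t := by
    rw [List.getD_eq_getElem _ 1 (by rwa [cs.length_rightInvSeq])]
    exact hgetElem
  rw [← cs.wordProd_mul_getD_rightInvSeq, hgd, hω]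


/-! ### The chain (Bruhat) order -/

/-- One step of the Bruhat order: multiply on the right by a reflection, increasing length. -/
def BruhatStep (x y : W) : Prop :=
  ∃ t : W, cs.IsReflection t ∧ y = x * t ∧ ℓ x < ℓ y

/-- The Bruhat order defined via chains of reflections. -/
def ChainLE (x y : W) : Prop := Relation.ReflTransGen (BruhatStep cs) x y

lemma ChainLE.rfl (x : W) : ChainLE cs x x := Relation.ReflTransGen.refl

lemma chainLE_trans {x y z : W} (h1 : ChainLE cs x y) (h2 : ChainLE cs y z) :
    ChainLE cs x z := Relation.ReflTransGen.trans h1 h2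

lemma step_of_simple_descent {x : W} {r : B} (h : ℓ (x * σ r) < ℓ x) :
    BruhatStep cs (x * σ r) x :=
  ⟨σ r, cs.isReflection_simple r, by rw [mul_assoc, cs.simple_mul_simple_self, mul_one], h⟩

lemma step_of_simple_ascent {x : W} {r : B} (h : ℓ x < ℓ (x * σ r)) :
    BruhatStep cs x (x * σ r) :=
  ⟨σ r, cs.isReflection_simple r, rfl, h⟩

lemma step_of_left_descent {u : W} {r : B} (h : ℓ (σ r * u) < ℓ u) :
    BruhatStep cs (σ r * u) u := by
  refine ⟨u⁻¹ * σ r * u, ?_, ?_, ?_⟩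
  · have := (cs.isReflection_simple r).conj u⁻¹
    simpa using this
  · simp [mul_assoc, cs.simple_mul_simple_cancel_left]
  · simpa using h

/-- Subword (of arbitrary word) from chain order, via strong exchange. -/
lemma exists_sublist_of_chainLE {x w : W} (h : ChainLE cs x w) :
    ∀ ω : List B, π ω = w → ∃ l : List B, l <+ ω ∧ π l = x := by
  induction h using Relation.ReflTransGen.head_induction_on with
  | refl => exact fun ω hω => ⟨ω, List.Sublist.refl ω, hω⟩
  | head hstep _ ih =>
    intro ω hω
    obtain ⟨l₂, hsub, hπ⟩ := ih ω hω
    obtain ⟨t, ht, rfl, hlt⟩ := hstep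
    have hexch := strong_exchange cs ht (by
      rwa [mul_assoc, ht.mul_self, mul_one]) l₂ hπ
    obtain ⟨j, hj, hπ'⟩ := hexch
    refine ⟨l₂.eraseIdx j, (List.eraseIdx_sublist l₂ j).trans hsub, ?_⟩
    rw [hπ', mul_assoc, ht.mul_self, mul_one]

lemma chainLE_one_iff {x : W} : ChainLE cs x 1 ↔ x = 1 := by
  constructor
  · intro h
    obtain ⟨l, hsub, hπ⟩ := exists_sublist_of_chainLE cs h [] (cs.wordProd_nil)
    rw [List.sublist_nil.mp hsub] at hπ
    rw [← hπ, cs.wordProd_nil]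
  · rintro rfl; exact ChainLE.rfl cs 1

/-- The mutual "property Z" lemmas, proven by strong induction on the length of `z`. -/
lemma DE_lemma : ∀ n : ℕ, ∀ z : W, ℓ z = n →
    (∀ (u : W) (r : B), ChainLE cs u z → ℓ z < ℓ (z * σ r) → ℓ u < ℓ (u * σ r) →
      ChainLE cs (u * σ r) (z * σ r)) ∧
    (∀ (u : W) (r : B), ChainLE cs u z → ℓ u < ℓ (u * σ r) → ℓ (z * σ r) < ℓ z →
      ChainLE cs (u * σ r) z) := by
  intro n
  induction n using Nat.strong_induction_on with
  | _ n IH =>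
    intro z hz
    constructor
    · -- part D
      intro u r hu hzr hur
      rcases Relation.ReflTransGen.cases_tail hu with heq | ⟨z', hu', hstep⟩
      · rw [heq]; exact ChainLE.rfl cs _
      · obtain ⟨t, ht, rfl, hlt⟩ := hstep
        -- here z = z' * t
        have hlz' : ℓ z' < n := by omega
        have hstep2 : BruhatStep cs (z' * σ r) (z' * t * σ r) := by
          refine ⟨σ r * t * σ r, by simpa using ht.conj (σ r), ?_, ?_⟩
          · simp [mul_assoc, cs.simple_mul_simple_cancel_left]
          · have h1 : ℓ (z' * t * σ r) = ℓ (z' * t) + 1 := by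
              rcases cs.length_mul_simple (z' * t) r with h | h
              · exact h
              · omega
            have h2 : ℓ (z' * σ r) ≤ ℓ z' + 1 := by
              rcases cs.length_mul_simple z' r with h | h <;> omega
            omega
        rcases lt_or_gt_of_ne (cs.length_mul_simple_ne z' r) with hz'r | hz'r
        · -- descent at z' : use E at z'
          have hE := (IH (ℓ z') hlz' z' rfl).2 u r hu' hur hz'r
          exact chainLE_trans cs hE <| chainLE_trans cs
            (Relation.ReflTransGen.single ⟨t, ht, rfl, hlt⟩)
            (Relation.ReflTransGen.single (step_of_simple_ascent cs hzr))
        · -- ascent at z' : use D at z'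
          have hD := (IH (ℓ z') hlz' z' rfl).1 u r hu' hz'r hur
          exact chainLE_trans cs hD (Relation.ReflTransGen.single hstep2)
    · -- part E
      intro u r hu hur hzr
      rcases Relation.ReflTransGen.cases_tail hu with heq | ⟨z', hu', hstep⟩
      · subst heq; omega
      · obtain ⟨t, ht, rfl, hlt⟩ := hstep
        have hlz' : ℓ z' < n := by omega
        rcases lt_or_gt_of_ne (cs.length_mul_simple_ne z' r) with hz'r | hz'r
        · -- descent at z' : use E at z'
          have hE := (IH (ℓ z') hlz' z' rfl).2 u r hu' hur hz'r
          exact chainLE_trans cs hE (Relation.ReflTransGen.single ⟨t, ht, rfl, hlt⟩)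
        · -- ascent at z'
          have hD := (IH (ℓ z') hlz' z' rfl).1 u r hu' hz'r hur
          -- compare ℓ (z'*t*σr) and ℓ (z'*σr)
          have hne : ℓ (z' * t * σ r) ≠ ℓ (z' * σ r) := by
            have hrefl : cs.IsReflection (σ r * t * σ r) := by simpa using ht.conj (σ r)
            have heq2 : z' * t * σ r = (z' * σ r) * (σ r * t * σ r) := by
              simp [mul_assoc, cs.simple_mul_simple_cancel_left]
            rw [heq2]
            exact hrefl.length_mul_left_ne (z' * σ r)
          rcases lt_or_gt_of_ne hne with hledown | hleup
          · -- ℓ (z*σr) < ℓ (z'*σr) : exchange argument, t = σ r forced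
            have d1 : ℓ (z' * t * σ r) = ℓ (z' * t) + 1 ∨ ℓ (z' * t * σ r) + 1 = ℓ (z' * t) :=
              cs.length_mul_simple (z' * t) r
            have d2 : ℓ (z' * σ r) = ℓ z' + 1 ∨ ℓ (z' * σ r) + 1 = ℓ z' :=
              cs.length_mul_simple z' r
            have hz'len : ℓ (z' * t * σ r) + 1 = ℓ (z' * t) := by omega
            have heq3 : ℓ (z' * t) = ℓ z' + 1 := by omega
            -- reduced word of z*σr extended by r
            obtain ⟨γ, hγred, hγ⟩ := cs.exists_reduced_word' (z' * t * σ r)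
            have hωprod : π (γ ++ [r]) = z' * t := by
              rw [cs.wordProd_append, cs.wordProd_singleton, ← hγ, mul_assoc,
                cs.simple_mul_simple_self, mul_one]
            have hγlen : γ.length = ℓ (z' * t * σ r) := by
              rw [hγ]; exact hγred.symm
            -- apply strong exchange to remove t
            have hexch := strong_exchange cs ht (by
              rw [mul_assoc, ht.mul_self, mul_one]; omega) (γ ++ [r]) hωprod
            obtain ⟨j, hj, hπ'⟩ := hexch
            rw [mul_assoc, ht.mul_self, mul_one] at hπ'
            rw [List.length_append, List.length_singleton] at hj
            rcases Nat.lt_succ_iff_lt_or_eq.mp hj with hjlt | hjeq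
            · -- j < γ.length : contradiction
              exfalso
              rw [List.eraseIdx_append_of_lt_length hjlt [r]] at hπ'
              have hπ'' : π (γ.eraseIdx j) = z' * σ r := by
                have := congrArg (fun x => x * σ r) hπ'
                simp only [cs.wordProd_append, cs.wordProd_singleton] at this
                rw [mul_assoc, cs.simple_mul_simple_self, mul_one] at this
                exact this
              have hbound := cs.length_wordProd_le (γ.eraseIdx j)
              rw [hπ'', List.length_eraseIdx, if_pos hjlt] at hbound
              omega
            · -- j = γ.length : z' = z * σ r
              rw [hjeq, List.eraseIdx_append_of_length_le (le_refl γ.length) [r]] at hπ'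
              simp only [Nat.sub_self, List.eraseIdx_zero, List.tail_cons, List.append_nil] at hπ'
              -- π γ = z', but π γ = z'*t*σr
              have : z' * t * σ r = z' := by rw [hγ, hπ']
              have hzt : z' * t = z' * σ r := by
                have := congrArg (fun x => x * σ r) this
                simpa [mul_assoc, cs.simple_mul_simple_self] using this
              rw [hzt]
              exact hD
          · -- ℓ (z'*σr) < ℓ (z*σr) : go up then down
            have hstep2 : BruhatStep cs (z' * σ r) (z' * t * σ r) := by
              refine ⟨σ r * t * σ r, by simpa using ht.conj (σ r), ?_, hleup⟩
              simp [mul_assoc, cs.simple_mul_simple_cancel_left]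
            exact chainLE_trans cs hD <| chainLE_trans cs
              (Relation.ReflTransGen.single hstep2)
              (Relation.ReflTransGen.single (step_of_simple_descent cs hzr))

/-- Subword property: a sublist of a reduced word is below in chain order. -/
lemma chainLE_of_sublist_reduced {ω : List B} (hred : cs.IsReduced ω) :
    ∀ l : List B, l <+ ω → ChainLE cs (π l) (π ω) := by
  induction ω using List.reverseRecOn with
  | nil =>
    intro l hl
    rw [List.sublist_nil.mp hl]
    exact ChainLE.rfl cs _
  | append_singleton α i ih =>
    intro l hl
    have hαred : cs.IsReduced α := by
      have := hred.take α.length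
      rwa [List.take_left] at this
    have hasc : ℓ (π α) < ℓ (π α * σ i) := by
      have h1 : ℓ (π α) = α.length := hαred
      have h2 : ℓ (π α * σ i) = α.length + 1 := by
        have := hred
        unfold CoxeterSystem.IsReduced at this
        rw [cs.wordProd_append, cs.wordProd_singleton] at this
        rw [this, List.length_append, List.length_singleton]
      omega
    rw [cs.wordProd_append, cs.wordProd_singleton]
    obtain ⟨l₁, l₂, rfl, hl₁, hl₂⟩ := List.sublist_append_iff.mp hl
    have hl₂' : l₂ = [] ∨ l₂ = [i] := by
      cases hl₂ with
      | cons _ h => left; exact List.sublist_nil.mp h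
      | cons_cons _ h => right; rw [List.sublist_nil.mp h]
    rcases hl₂' with rfl | rfl
    · rw [List.append_nil]
      exact chainLE_trans cs (ih hαred l₁ hl₁)
        (Relation.ReflTransGen.single (step_of_simple_ascent cs hasc))
    · rw [cs.wordProd_append, cs.wordProd_singleton]
      have hbase := ih hαred l₁ hl₁
      rcases lt_or_gt_of_ne (cs.length_mul_simple_ne (π l₁) i) with hdesc | hasc2
      · -- descent: π l₁ * σ i < π l₁ ≤ π α ≤ π α * σ i
        exact chainLE_trans cs (Relation.ReflTransGen.single (step_of_simple_descent cs hdesc))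
          <| chainLE_trans cs hbase
            (Relation.ReflTransGen.single (step_of_simple_ascent cs hasc))
      · exact (DE_lemma cs (ℓ (π α)) (π α) rfl).1 (π l₁) i hbase hasc hasc2

lemma chainLE_inv {x y : W} (h : ChainLE cs x y) : ChainLE cs x⁻¹ y⁻¹ := by
  induction h with
  | refl => exact ChainLE.rfl cs _
  | tail _ hstep ih =>
    rename_i b c _
    obtain ⟨t, ht, rfl, hlt⟩ := hstep
    refine chainLE_trans cs ih (Relation.ReflTransGen.single ?_)
    refine ⟨b * t * b⁻¹, ht.conj b, ?_, ?_⟩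
    · rw [mul_inv_rev, ht.inv]
      group
    · rw [cs.length_inv, cs.length_inv]
      exact hlt



/-! ### Lifting lemmas -/

-- Right lifting: r is a right descent of u.
lemma lift_a {u x : W} {r : B} (hu : ℓ (u * σ r) < ℓ u) (hx : ℓ x < ℓ (x * σ r))
    (h : ChainLE cs x u) : ChainLE cs x (u * σ r) := by
  obtain ⟨γ, hγred, hγ⟩ := cs.exists_reduced_word' (u * σ r)
  have hωprod : π (γ ++ [r]) = u := by
    rw [cs.wordProd_append, cs.wordProd_singleton, ← hγ, mul_assoc,
      cs.simple_mul_simple_self, mul_one]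
  obtain ⟨l, hsub, hπ⟩ := exists_sublist_of_chainLE cs h (γ ++ [r]) hωprod
  obtain ⟨l₁, l₂, rfl, hl₁, hl₂⟩ := List.sublist_append_iff.mp hsub
  have hγchain : ∀ l' : List B, l' <+ γ → ChainLE cs (π l') (u * σ r) := by
    intro l' hl'
    have := chainLE_of_sublist_reduced cs hγred l' hl'
    rwa [← hγ] at this
  have hl₂' : l₂ = [] ∨ l₂ = [r] := by
    cases hl₂ with
    | cons _ h' => left; exact List.sublist_nil.mp h'
    | cons_cons _ h' => right; rw [List.sublist_nil.mp h']
  rcases hl₂' with rfl | rfl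
  · rw [List.append_nil] at hπ
    rw [← hπ]
    exact hγchain l₁ hl₁
  · rw [cs.wordProd_append, cs.wordProd_singleton] at hπ
    have hxσ : π l₁ = x * σ r := by
      have := congrArg (fun z => z * σ r) hπ
      simpa [mul_assoc, cs.simple_mul_simple_self] using this
    have hch : ChainLE cs (x * σ r) (u * σ r) := hxσ ▸ hγchain l₁ hl₁
    exact chainLE_trans cs (Relation.ReflTransGen.single (step_of_simple_ascent cs hx)) hch

lemma lift_b {u x : W} {r : B} (hu : ℓ (u * σ r) < ℓ u) (hx : ℓ (x * σ r) < ℓ x)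
    (h : ChainLE cs x u) : ChainLE cs (x * σ r) (u * σ r) := by
  obtain ⟨γ, hγred, hγ⟩ := cs.exists_reduced_word' (u * σ r)
  have hωprod : π (γ ++ [r]) = u := by
    rw [cs.wordProd_append, cs.wordProd_singleton, ← hγ, mul_assoc,
      cs.simple_mul_simple_self, mul_one]
  obtain ⟨l, hsub, hπ⟩ := exists_sublist_of_chainLE cs h (γ ++ [r]) hωprod
  obtain ⟨l₁, l₂, rfl, hl₁, hl₂⟩ := List.sublist_append_iff.mp hsub
  have hγchain : ∀ l' : List B, l' <+ γ → ChainLE cs (π l') (u * σ r) := by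
    intro l' hl'
    have := chainLE_of_sublist_reduced cs hγred l' hl'
    rwa [← hγ] at this
  have hl₂' : l₂ = [] ∨ l₂ = [r] := by
    cases hl₂ with
    | cons _ h' => left; exact List.sublist_nil.mp h'
    | cons_cons _ h' => right; rw [List.sublist_nil.mp h']
  rcases hl₂' with rfl | rfl
  · rw [List.append_nil] at hπ
    refine chainLE_trans cs (Relation.ReflTransGen.single (step_of_simple_descent cs hx)) ?_
    rw [← hπ]
    exact hγchain l₁ hl₁
  · rw [cs.wordProd_append, cs.wordProd_singleton] at hπ
    have hxσ : π l₁ = x * σ r := by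
      have := congrArg (fun z => z * σ r) hπ
      simpa [mul_assoc, cs.simple_mul_simple_self] using this
    exact hxσ ▸ hγchain l₁ hl₁

lemma lift_c {u x : W} {r : B} (hu : ℓ (u * σ r) < ℓ u) (hx : ℓ (x * σ r) < ℓ x)
    (h : ChainLE cs (x * σ r) (u * σ r)) : ChainLE cs x u := by
  have hD := (DE_lemma cs (ℓ (u * σ r)) (u * σ r) rfl).1 (x * σ r) r h
  rw [mul_assoc, cs.simple_mul_simple_self, mul_one, mul_assoc, cs.simple_mul_simple_self,
    mul_one] at hD
  exact hD hu hx

lemma length_inv_simple (u : W) (r : B) : ℓ (u⁻¹ * σ r) = ℓ (σ r * u) := by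
  rw [← cs.length_inv (u⁻¹ * σ r), mul_inv_rev, cs.inv_simple, inv_inv]

-- Left lifting via inverses: r is a left descent of u.
lemma left_lift_a {u x : W} {r : B} (hu : ℓ (σ r * u) < ℓ u) (hx : ℓ x < ℓ (σ r * x))
    (h : ChainLE cs x u) : ChainLE cs x (σ r * u) := by
  have h1 : ChainLE cs x⁻¹ (u⁻¹ * σ r) := by
    apply lift_a cs
    · rw [length_inv_simple cs, cs.length_inv]; exact hu
    · rw [length_inv_simple cs, cs.length_inv]; exact hx
    · exact chainLE_inv cs h
  have h2 := chainLE_inv cs h1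
  rwa [inv_inv, mul_inv_rev, cs.inv_simple, inv_inv] at h2

lemma left_lift_b {u x : W} {r : B} (hu : ℓ (σ r * u) < ℓ u) (hx : ℓ (σ r * x) < ℓ x)
    (h : ChainLE cs x u) : ChainLE cs (σ r * x) (σ r * u) := by
  have h1 : ChainLE cs (x⁻¹ * σ r) (u⁻¹ * σ r) := by
    apply lift_b cs
    · rw [length_inv_simple cs, cs.length_inv]; exact hu
    · rw [length_inv_simple cs, cs.length_inv]; exact hx
    · exact chainLE_inv cs h
  have h2 := chainLE_inv cs h1
  rwa [mul_inv_rev, cs.inv_simple, inv_inv, mul_inv_rev, cs.inv_simple, inv_inv] at h2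

lemma left_lift_c {u x : W} {r : B} (hu : ℓ (σ r * u) < ℓ u) (hx : ℓ (σ r * x) < ℓ x)
    (h : ChainLE cs (σ r * x) (σ r * u)) : ChainLE cs x u := by
  have h1 : ChainLE cs (x⁻¹ * σ r) (u⁻¹ * σ r) := by
    have := chainLE_inv cs h
    rwa [mul_inv_rev, cs.inv_simple, mul_inv_rev, cs.inv_simple] at this
  have h2 : ChainLE cs x⁻¹ u⁻¹ := by
    apply lift_c cs (r := r) ?_ ?_ h1
    · rw [length_inv_simple cs, cs.length_inv]; exact hu
    · rw [length_inv_simple cs, cs.length_inv]; exact hx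
  have := chainLE_inv cs h2
  rwa [inv_inv, inv_inv] at this

/-! ### The forced-coincidence lemma and the key join lemma -/

/-- If `r` is a left descent and `s` a right descent of `v`, then either
`σ r * v * σ s` is shorter than `v * σ s`, or `σ r * v * σ s = v`. -/
lemma SL_lemma {v : W} {r s : B} (hrv : ℓ (σ r * v) < ℓ v) (hvs : ℓ (v * σ s) < ℓ v) :
    ℓ (σ r * v * σ s) < ℓ (v * σ s) ∨ σ r * v * σ s = v := by
  obtain ⟨γ, hγred, hγ⟩ := cs.exists_reduced_word' (σ r * v)
  have hωprod : π (r :: γ) = v := by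
    rw [cs.wordProd_cons, ← hγ, cs.simple_mul_simple_cancel_left]
  have hγlen : γ.length = ℓ (σ r * v) := by rw [hγ]; exact hγred.symm
  obtain ⟨j, hj, hπ'⟩ := strong_exchange cs (cs.isReflection_simple s) hvs (r :: γ) hωprod
  cases j with
  | zero =>
    right
    simp only [List.eraseIdx_zero, List.tail_cons] at hπ'
    rw [← hγ] at hπ'
    rw [hπ', mul_assoc, cs.simple_mul_simple_self, mul_one]
  | succ k =>
    left
    have hπ'' : π (r :: γ.eraseIdx k) = v * σ s := by
      exact hπ'
    have hk : k < γ.length := by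
      simp only [List.length_cons] at hj
      omega
    have hval : σ r * (v * σ s) = π (γ.eraseIdx k) := by
      rw [← hπ'', cs.wordProd_cons, cs.simple_mul_simple_cancel_left]
    have hbound := cs.length_wordProd_le (γ.eraseIdx k)
    rw [← hval, List.length_eraseIdx, if_pos hk] at hbound
    have hstep : ℓ (v * σ s) ≤ ℓ (σ r * (v * σ s)) + 1 := by
      rcases cs.length_simple_mul (v * σ s) r with h' | h' <;> omega
    have ds := cs.length_mul_simple v s
    rw [← mul_assoc] at hbound hstep
    rcases ds with h' | h' <;> omega

lemma simple_inj {s t : B} (h : σ s = σ t) : s = t :=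
  BruhatAux2.simple_injective cs h

/-- Key lemma: if `s ≠ t` are both right descents of `v` and both `v σ s` and `v σ t`
are below `u` in the chain order, then so is `v`. -/
lemma KL_lemma : ∀ n : ℕ, ∀ u v : W, ∀ s t : B, ℓ u = n → s ≠ t →
    ℓ (v * σ s) < ℓ v → ℓ (v * σ t) < ℓ v →
    ChainLE cs (v * σ s) u → ChainLE cs (v * σ t) u → ChainLE cs v u := by
  intro n
  induction n using Nat.strong_induction_on with
  | _ n IH =>
    intro u v s t hn hst hvs hvt hsu htu
    rcases eq_or_ne u 1 with rfl | hu1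
    · exfalso
      have h1 : v * σ s = 1 := (chainLE_one_iff cs).mp hsu
      have h2 : v * σ t = 1 := (chainLE_one_iff cs).mp htu
      have : σ s = σ t := by
        have hv1 : v = σ s := by
          have := congrArg (fun z => z * σ s) h1
          simpa [mul_assoc, cs.simple_mul_simple_self] using this
        have hv2 : v = σ t := by
          have := congrArg (fun z => z * σ t) h2
          simpa [mul_assoc, cs.simple_mul_simple_self] using this
        rw [← hv1, hv2]
      exact hst (simple_inj cs this)
    · obtain ⟨r, hr⟩ := cs.exists_leftDescent_of_ne_one hu1
      have hrudesc : ℓ (σ r * u) < ℓ u := hr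
      have hrulen : ℓ (σ r * u) = n - 1 ∧ 1 ≤ n := by
        rcases cs.length_simple_mul u r with h' | h' <;> omega
      rcases lt_or_gt_of_ne (cs.length_simple_mul_ne v r) with hrv | hrv
      · -- r is a left descent of v
        rcases SL_lemma cs hrv hvs with hdrop_s | heq_s
        · rcases SL_lemma cs hrv hvt with hdrop_t | heq_t
          · -- both drop: recurse with σ r * v
            have hvs' : ℓ (σ r * v * σ s) < ℓ (σ r * v) := by
              rcases cs.length_simple_mul v r with h' | h' <;>
              rcases cs.length_mul_simple v s with h'' | h'' <;> omega
            have hvt' : ℓ (σ r * v * σ t) < ℓ (σ r * v) := by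
              rcases cs.length_simple_mul v r with h' | h' <;>
              rcases cs.length_mul_simple v t with h'' | h'' <;> omega
            have hchain_s : ChainLE cs (σ r * (v * σ s)) (σ r * u) :=
              left_lift_b cs hrudesc (by rw [← mul_assoc]; exact hdrop_s) hsu
            have hchain_t : ChainLE cs (σ r * (v * σ t)) (σ r * u) :=
              left_lift_b cs hrudesc (by rw [← mul_assoc]; exact hdrop_t) htu
            rw [← mul_assoc] at hchain_s hchain_t
            have hrec := IH (n - 1) (by omega) (σ r * u) (σ r * v) s t hrulen.1 hst
              hvs' hvt' hchain_s hchain_t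
            exact left_lift_c cs hrudesc hrv hrec
          · -- σ r * v * σ t = v : then v * σ t = σ r * v
            have hvt_eq : v * σ t = σ r * v := by
              have := congrArg (fun z => σ r * z) heq_t
              simpa [← mul_assoc, cs.simple_mul_simple_cancel_left] using this
            have hasc : ℓ (v * σ t) < ℓ (σ r * (v * σ t)) := by
              rw [hvt_eq, cs.simple_mul_simple_cancel_left]
              exact hrv
            have h2 : ChainLE cs (v * σ t) (σ r * u) := left_lift_a cs hrudesc hasc htu
            rw [hvt_eq] at h2
            exact left_lift_c cs hrudesc hrv h2
        · -- σ r * v * σ s = v : then v * σ s = σ r * v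
          have hvs_eq : v * σ s = σ r * v := by
            have := congrArg (fun z => σ r * z) heq_s
            simpa [← mul_assoc, cs.simple_mul_simple_cancel_left] using this
          have hasc : ℓ (v * σ s) < ℓ (σ r * (v * σ s)) := by
            rw [hvs_eq, cs.simple_mul_simple_cancel_left]
            exact hrv
          have h2 : ChainLE cs (v * σ s) (σ r * u) := left_lift_a cs hrudesc hasc hsu
          rw [hvs_eq] at h2
          exact left_lift_c cs hrudesc hrv h2
      · -- r is a left ascent of v
        have hascgen : ∀ s' : B, ℓ (v * σ s') < ℓ v → ℓ (v * σ s') < ℓ (σ r * (v * σ s')) := by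
          intro s' hvs'
          rcases cs.length_simple_mul (v * σ s') r with h' | h'
          · omega
          · exfalso
            have hsimp : σ r * (v * σ s') * σ s' = σ r * v := by
              rw [mul_assoc (σ r), mul_assoc v, cs.simple_mul_simple_self, mul_one]
            have hb : ℓ (σ r * v) ≤ ℓ (σ r * (v * σ s')) + 1 := by
              have h2 := cs.length_mul_simple (σ r * (v * σ s')) s'
              rw [hsimp] at h2
              rcases h2 with h'' | h'' <;> omega
            omega
        have hasc_s := hascgen s hvs
        have hasc_t := hascgen t hvt
        have h2s : ChainLE cs (v * σ s) (σ r * u) := left_lift_a cs hrudesc hasc_s hsu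
        have h2t : ChainLE cs (v * σ t) (σ r * u) := left_lift_a cs hrudesc hasc_t htu
        have hrec := IH (n - 1) (by omega) (σ r * u) v s t hrulen.1 hst hvs hvt h2s h2t
        exact chainLE_trans cs hrec (Relation.ReflTransGen.single (step_of_left_descent cs hrudesc))



/-! ### Bridge with the subword definition -/

lemma bruhatLE_iff_chainLE {x w : W} : BruhatLE cs x w ↔ ChainLE cs x w := by
  constructor
  · rintro ⟨l, hred, hprod, l', hsub, hprod'⟩
    rw [← hprod, ← hprod']
    exact chainLE_of_sublist_reduced cs hred l' hsub
  · intro h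
    obtain ⟨ω, hred, hw⟩ := cs.exists_reduced_word' w
    obtain ⟨l, hsub, hl⟩ := exists_sublist_of_chainLE cs h ω hw.symm
    exact ⟨ω, hred, hw.symm, l, hsub, hl⟩

lemma bruhatLE_inv {x w : W} (h : BruhatLE cs x w) : BruhatLE cs x⁻¹ w⁻¹ :=
  (bruhatLE_iff_chainLE cs).mpr (chainLE_inv cs ((bruhatLE_iff_chainLE cs).mp h))

/-- The main auxiliary result: any Bruhat-minimal element of `{v : ¬ v ≤ w}` has at most one
right descent. -/
lemma key_subsingleton (w v : W) (hv : ¬ BruhatLE cs v w)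
    (hmin : ∀ v' : W, ¬ BruhatLE cs v' w → BruhatLE cs v' v → v' = v) :
    {s : B | ℓ (v * σ s) < ℓ v}.Subsingleton := by
  intro s hs t ht
  by_contra hst
  have hs' : ℓ (v * σ s) < ℓ v := hs
  have ht' : ℓ (v * σ t) < ℓ v := ht
  have hble : ∀ s' : B, ℓ (v * σ s') < ℓ v → BruhatLE cs (v * σ s') w := by
    intro s' hdesc
    have hasc : ℓ (v * σ s') < ℓ ((v * σ s') * σ s') := by
      rw [mul_assoc, cs.simple_mul_simple_self, mul_one]
      exact hdesc
    have hch : ChainLE cs (v * σ s') v := by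
      have := Relation.ReflTransGen.single (step_of_simple_ascent cs hasc)
      rwa [mul_assoc, cs.simple_mul_simple_self, mul_one] at this
    have hne : v * σ s' ≠ v := by
      intro heq
      exact cs.length_mul_simple_ne v s' (congrArg cs.length heq)
    by_contra hc
    exact hne (hmin _ hc ((bruhatLE_iff_chainLE cs).mpr hch))
  have hchain := KL_lemma cs (ℓ w) w v s t rfl hst hs' ht'
    ((bruhatLE_iff_chainLE cs).mp (hble s hs'))
    ((bruhatLE_iff_chainLE cs).mp (hble t ht'))
  exact hv ((bruhatLE_iff_chainLE cs).mpr hchain)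

end BruhatAux

/-- For any finite Coxeter system `(W,S)` and any `w ∈ W`, every Bruhat-minimal element `v`
of `{v : v ≰ w}` is bigrassmannian: both `v` and `v⁻¹` have at most one right descent. -/
theorem essential_set_elements_are_bigrassmannian
    {B W : Type*} [Group W] [Finite W] {M : CoxeterMatrix B} (cs : CoxeterSystem M W)
    (w v : W) (hv : ¬ BruhatLE cs v w)
    (hmin : ∀ v' : W, ¬ BruhatLE cs v' w → BruhatLE cs v' v → v' = v) :
    {s : B | cs.length (v * cs.simple s) < cs.length v}.Subsingleton ∧
    {s : B | cs.length (v⁻¹ * cs.simple s) < cs.length v⁻¹}.Subsingleton := by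
  constructor
  · exact BruhatAux.key_subsingleton cs w v hv hmin
  · apply BruhatAux.key_subsingleton cs w⁻¹ v⁻¹
    · intro h
      have := BruhatAux.bruhatLE_inv cs h
      rw [inv_inv, inv_inv] at this
      exact hv this
    · intro x h1 h2
      have h1' : ¬ BruhatLE cs x⁻¹ w := by
        intro hh
        have := BruhatAux.bruhatLE_inv cs hh
        rw [inv_inv] at this
        exact h1 this
      have h2' : BruhatLE cs x⁻¹ v := by
        have := BruhatAux.bruhatLE_inv cs h2
        rwa [inv_inv] at this
      have := hmin x⁻¹ h1' h2'
      rw [← this, inv_inv]
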